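/- Let σ ⊆ N_ℚ ≅ ℚⁿ be a strongly convex polyhedral cone with dual σ^∨, and P an integral σ^∨-polyhedron contained in σ^∨ (i.e. P = Q + σ^∨ with Q a polytope with vertices in the lattice M). Then for every integer e ≥ n − 1, the polyhedron eP is normal: every lattice point of k·(eP) is a sum of k lattice points of eP, for all k ≥ 1. -/

import Mathlib

open scoped Pointwise

/-- The standard pairing between `M_ℚ` and `N_ℚ`, both identified with `Fin n → ℚ`. -/
def pairQ {n : ℕ} (m v : Fin n → ℚ) : ℚ := ∑ i, m i * v i

/-- The conical hull (set of nonnegative rational combinations) of a set. -/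
def coneHull {n : ℕ} (S : Set (Fin n → ℚ)) : Set (Fin n → ℚ) :=
  {v | ∃ (T : Finset (Fin n → ℚ)) (c : (Fin n → ℚ) → ℚ),
      ↑T ⊆ S ∧ (∀ x ∈ T, 0 ≤ c x) ∧ v = ∑ x ∈ T, c x • x}

/-- A polyhedral cone is the conical hull of a finite set. -/
def IsPolyhedralCone {n : ℕ} (σ : Set (Fin n → ℚ)) : Prop :=
  ∃ S : Finset (Fin n → ℚ), σ = coneHull ↑S

/-- A cone is strongly convex (pointed) if it contains no line. -/
def IsStronglyConvex {n : ℕ} (σ : Set (Fin n → ℚ)) : Prop :=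
  ∀ v ∈ σ, -v ∈ σ → v = 0

/-- The dual cone `σ^∨ ⊆ M_ℚ` of a cone `σ ⊆ N_ℚ`. -/
def dualCone {n : ℕ} (σ : Set (Fin n → ℚ)) : Set (Fin n → ℚ) :=
  {m | ∀ v ∈ σ, 0 ≤ pairQ m v}

/-- A `σ`-polyhedron: Minkowski sum of a (nonempty) polytope with the cone `σ`. -/
def IsSigmaPolyhedron {n : ℕ} (σ Δ : Set (Fin n → ℚ)) : Prop :=
  ∃ Q : Finset (Fin n → ℚ), Q.Nonempty ∧ Δ = convexHull ℚ ↑Q + σ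

/-- Cast a lattice point of `ℤⁿ` into `ℚⁿ`. -/
def castZ {n : ℕ} (m : Fin n → ℤ) : Fin n → ℚ := fun i => (m i : ℚ)

/-- The `e`-fold dilation `eP` of a polyhedron `P` with recession cone `ω`, with the
convention `0·P = ω`. -/
noncomputable def dilate {n : ℕ} (ω P : Set (Fin n → ℚ)) (e : ℕ) : Set (Fin n → ℚ) :=
  if e = 0 then ω else (e : ℚ) • P

section aux
variable {n : ℕ} {σ : Set (Fin n → ℚ)}

lemma dual_zero : (0 : Fin n → ℚ) ∈ dualCone σ := by
  intro v _; simp [pairQ]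

lemma dual_add {x y : Fin n → ℚ} (hx : x ∈ dualCone σ) (hy : y ∈ dualCone σ) :
    x + y ∈ dualCone σ := by
  intro v hv
  have : pairQ (x + y) v = pairQ x v + pairQ y v := by
    simp [pairQ, add_mul, Finset.sum_add_distrib]
  rw [this]
  exact add_nonneg (hx v hv) (hy v hv)

lemma dual_smul {a : ℚ} (ha : 0 ≤ a) {x : Fin n → ℚ} (hx : x ∈ dualCone σ) :
    a • x ∈ dualCone σ := by
  intro v hv
  have : pairQ (a • x) v = a * pairQ x v := by
    simp [pairQ, Finset.mul_sum, mul_assoc]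
  rw [this]
  exact mul_nonneg ha (hx v hv)

lemma dual_sum (T : Finset (Fin n → ℚ)) (μ : (Fin n → ℚ) → ℚ)
    (hT : ∀ q ∈ T, q ∈ dualCone σ) (hμ : ∀ q ∈ T, 0 ≤ μ q) :
    (∑ q ∈ T, μ q • q) ∈ dualCone σ := by
  classical
  induction T using Finset.induction_on with
  | empty => simpa using (dual_zero (σ := σ))
  | @insert a s hq ih =>
    rw [Finset.sum_insert hq]
    exact dual_add (dual_smul (hμ a (Finset.mem_insert_self a s))
        (hT a (Finset.mem_insert_self a s)))
      (ih (fun q hq' => hT q (Finset.mem_insert_of_mem hq'))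
        (fun q hq' => hμ q (Finset.mem_insert_of_mem hq')))

lemma smul_set_add' (a : ℚ) (A B : Set (Fin n → ℚ)) : a • (A + B) = a • A + a • B := by
  ext x
  constructor
  · rintro ⟨y, ⟨u, hu, v, hv, rfl⟩, rfl⟩
    exact ⟨a • u, ⟨u, hu, rfl⟩, a • v, ⟨v, hv, rfl⟩, (smul_add a u v).symm⟩
  · rintro ⟨-, ⟨u, hu, rfl⟩, -, ⟨v, hv, rfl⟩, rfl⟩
    exact ⟨u + v, ⟨u, hu, v, hv, rfl⟩, smul_add a u v⟩

lemma smul_dual {a : ℚ} (ha : 0 < a) : a • (dualCone σ) = dualCone σ := by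
  ext x
  constructor
  · rintro ⟨y, hy, rfl⟩; exact dual_smul ha.le hy
  · intro hx
    exact ⟨a⁻¹ • x, dual_smul (by positivity) hx, by
      show a • a⁻¹ • x = x
      rw [smul_smul, mul_inv_cancel₀ ha.ne', one_smul]⟩

def latt {n : ℕ} (x : Fin n → ℚ) : Prop := ∃ u : Fin n → ℤ, x = castZ u

lemma castZ_add (u v : Fin n → ℤ) : castZ (u + v) = castZ u + castZ v := by
  funext i; simp [castZ]

lemma castZ_inj {u v : Fin n → ℤ} (h : castZ u = castZ v) : u = v := by
  funext i
  have : ((u i : ℚ)) = (v i : ℚ) := congrFun h i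
  exact_mod_cast this

lemma latt_sub {x y : Fin n → ℚ} (hx : latt x) (hy : latt y) : latt (x - y) := by
  obtain ⟨u, rfl⟩ := hx; obtain ⟨v, rfl⟩ := hy
  exact ⟨u - v, by funext i; simp [castZ]⟩

lemma latt_sum (T : Finset (Fin n → ℚ)) (a : (Fin n → ℚ) → ℕ)
    (hT : ∀ q ∈ T, latt q) : latt (∑ q ∈ T, (a q : ℚ) • q) := by
  classical
  induction T using Finset.induction_on with
  | empty => exact ⟨0, by funext i; simp [castZ]⟩
  | @insert b s hq ih =>
    rw [Finset.sum_insert hq]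
    obtain ⟨u, hu⟩ := hT b (Finset.mem_insert_self b s)
    obtain ⟨w, hw⟩ := ih (fun q hq' => hT q (Finset.mem_insert_of_mem hq'))
    refine ⟨(a b : ℤ) • u + w, ?_⟩
    rw [hu, hw]
    funext i
    simp [castZ]

lemma exists_le_sum (e : ℕ) (T : Finset (Fin n → ℚ)) (b : (Fin n → ℚ) → ℕ)
    (h : e ≤ ∑ q ∈ T, b q) :
    ∃ a : (Fin n → ℚ) → ℕ, (∀ q, a q ≤ b q) ∧ ∑ q ∈ T, a q = e := by
  classical
  induction e with
  | zero => exact ⟨fun _ => 0, fun _ => Nat.zero_le _, by simp⟩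
  | succ e ih =>
    obtain ⟨a, ha, hsum⟩ := ih (Nat.le_of_succ_le h)
    have hlt : ∑ q ∈ T, a q < ∑ q ∈ T, b q := by omega
    obtain ⟨q₀, hq₀T, hq₀⟩ : ∃ q ∈ T, a q < b q := by
      by_contra hc
      push_neg at hc
      exact absurd (Finset.sum_le_sum (fun q hq => hc q hq)) (not_le.mpr hlt)
    refine ⟨Function.update a q₀ (a q₀ + 1), ?_, ?_⟩
    · intro q
      rcases eq_or_ne q q₀ with rfl | hne
      · simpa using hq₀
      · simpa [Function.update_of_ne hne] using ha q
    · rw [Finset.sum_update_of_mem hq₀T]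
      have := Finset.sum_eq_sum_sdiff_singleton_add hq₀T a
      omega

end aux

lemma massMem {n : ℕ} (σ : Set (Fin n → ℚ)) (Q' : Set (Fin n → ℚ))
    (hQ'σ : Q' ⊆ dualCone σ) (e : ℕ) (he : 1 ≤ e)
    (T : Finset (Fin n → ℚ)) (hT : ↑T ⊆ Q')
    (μ : (Fin n → ℚ) → ℚ) (hμ : ∀ q ∈ T, 0 ≤ μ q)
    (w : Fin n → ℚ) (hw : w ∈ dualCone σ)
    (hmass : (e : ℚ) ≤ ∑ q ∈ T, μ q) :
    (∑ q ∈ T, μ q • q) + w ∈ (e : ℚ) • (convexHull ℚ Q' + dualCone σ) := by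
  classical
  set s : ℚ := ∑ q ∈ T, μ q with hs
  have hspos : (0 : ℚ) < s := lt_of_lt_of_le (by exact_mod_cast he) hmass
  have hepos : (0 : ℚ) < (e : ℚ) := by exact_mod_cast he
  set S : Fin n → ℚ := ∑ q ∈ T, μ q • q with hS
  have hTd : ∀ q ∈ T, q ∈ dualCone σ := fun q hq => hQ'σ (hT hq)
  have hSd : S ∈ dualCone σ := dual_sum T μ hTd hμ
  -- the convex part
  have hy : T.centerMass μ id ∈ convexHull ℚ Q' :=
    Finset.centerMass_mem_convexHull T hμ hspos (fun q hq => hT hq)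
  have hyval : T.centerMass μ id = s⁻¹ • S := by
    rw [Finset.centerMass, hS]
    congr 1
  -- the cone part
  have hzd : ((e : ℚ)⁻¹ • ((1 - (e : ℚ)/s) • S + w)) ∈ dualCone σ := by
    apply dual_smul (by positivity)
    apply dual_add _ hw
    apply dual_smul _ hSd
    have : (e : ℚ)/s ≤ 1 := by
      rw [div_le_one hspos]; exact hmass
    linarith
  refine ⟨T.centerMass μ id + (e : ℚ)⁻¹ • ((1 - (e : ℚ)/s) • S + w),
    ⟨_, hy, _, hzd, rfl⟩, ?_⟩
  rw [hyval]
  show (e : ℚ) • (s⁻¹ • S + (e : ℚ)⁻¹ • ((1 - (e : ℚ)/s) • S + w)) = S + w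
  match_scalars <;> field_simp <;> ring

theorem peel {n : ℕ} (σ : Set (Fin n → ℚ)) (Q' : Set (Fin n → ℚ))
    (hQ'σ : Q' ⊆ dualCone σ) (hQ'l : ∀ q ∈ Q', latt q) (e : ℕ) (he : 1 ≤ e) :
    ∀ k : ℕ, 1 ≤ k → ∀ x : Fin n → ℚ, latt x →
    ∀ (T : Finset (Fin n → ℚ)) (μ : (Fin n → ℚ) → ℚ) (w : Fin n → ℚ),
    ↑T ⊆ Q' → (∀ q ∈ T, 0 ≤ μ q) → w ∈ dualCone σ →
    x = (∑ q ∈ T, μ q • q) + w →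
    ((k : ℚ) * e ≤ ∑ q ∈ T, μ q) →
    ((k : ℚ) * e - e ≤ ∑ q ∈ T, (⌊μ q⌋ : ℚ)) →
    ∃ f : Fin k → (Fin n → ℤ),
      (∀ j, castZ (f j) ∈ (e : ℚ) • (convexHull ℚ Q' + dualCone σ)) ∧
      x = ∑ j, castZ (f j) := by
  intro k hk
  induction k, hk using Nat.le_induction with
  | base =>
    intro x hx T μ w hT hμ hw hrep hm hf
    obtain ⟨u, rfl⟩ := hx
    refine ⟨fun _ => u, fun j => ?_, by simp⟩
    rw [hrep]
    exact massMem σ Q' hQ'σ e he T hT μ hμ w hw (by push_cast at hm ⊢; linarith)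
  | succ k hk ih =>
    intro x hx T μ w hT hμ hw hrep hm hf
    classical
    -- peel off one integral piece of mass e
    set b : (Fin n → ℚ) → ℕ := fun q => (⌊μ q⌋).toNat with hb
    have hfloor_cast : ∀ q ∈ T, ((b q : ℚ)) = (⌊μ q⌋ : ℚ) := by
      intro q hq
      have h0 : (0 : ℤ) ≤ ⌊μ q⌋ := Int.floor_nonneg.mpr (hμ q hq)
      rw [hb]
      simp only []
      exact_mod_cast congrArg (fun z => ((z : ℤ) : ℚ)) (Int.toNat_of_nonneg h0)
    have hbsum : (e : ℚ) ≤ ∑ q ∈ T, (b q : ℚ) := by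
      rw [Finset.sum_congr rfl hfloor_cast]
      have h1 : (1 : ℚ) ≤ (k : ℚ) := by exact_mod_cast hk
      have he' : (0 : ℚ) < (e : ℚ) := by exact_mod_cast he
      push_cast at hf
      nlinarith
    have hbsum' : e ≤ ∑ q ∈ T, b q := by
      have : ((e : ℚ)) ≤ ((∑ q ∈ T, b q : ℕ) : ℚ) := by push_cast; exact hbsum
      exact_mod_cast this
    obtain ⟨a, ha, hasum⟩ := exists_le_sum e T b hbsum'
    set m : Fin n → ℚ := ∑ q ∈ T, (a q : ℚ) • q with hmdef
    have hmlatt : latt m := latt_sum T a (fun q hq => hQ'l q (hT hq))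
    obtain ⟨um, hum⟩ := hmlatt
    have haq : ∀ q ∈ T, ((a q : ℚ)) ≤ μ q := by
      intro q hq
      calc ((a q : ℚ)) ≤ (b q : ℚ) := by exact_mod_cast ha q
        _ = (⌊μ q⌋ : ℚ) := hfloor_cast q hq
        _ ≤ μ q := Int.floor_le _
    have hmmem : m ∈ (e : ℚ) • (convexHull ℚ Q' + dualCone σ) := by
      have := massMem σ Q' hQ'σ e he T hT (fun q => (a q : ℚ))
        (fun q hq => by positivity) 0 dual_zero
        (by rw [← Nat.cast_sum, hasum])
      simpa using this
    -- the remainder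
    set μ' : (Fin n → ℚ) → ℚ := fun q => μ q - (a q : ℚ) with hμ'
    have hx' : latt (x - m) := latt_sub hx ⟨um, hum⟩
    have hrep' : x - m = (∑ q ∈ T, μ' q • q) + w := by
      rw [hrep, hmdef]
      have : ∑ q ∈ T, μ' q • q = (∑ q ∈ T, μ q • q) - ∑ q ∈ T, ((a q : ℚ)) • q := by
        rw [← Finset.sum_sub_distrib]
        exact Finset.sum_congr rfl (fun q _ => by rw [hμ']; rw [sub_smul])
      rw [this]
      abel
    have hm' : (k : ℚ) * e ≤ ∑ q ∈ T, μ' q := by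
      simp only [hμ']
      rw [Finset.sum_sub_distrib]
      have : ((∑ q ∈ T, a q : ℕ) : ℚ) = (e : ℚ) := by rw [hasum]
      push_cast at this hm ⊢
      linarith
    have hf' : (k : ℚ) * e - e ≤ ∑ q ∈ T, (⌊μ' q⌋ : ℚ) := by
      have hfl : ∀ q ∈ T, (⌊μ' q⌋ : ℚ) = (⌊μ q⌋ : ℚ) - (a q : ℚ) := by
        intro q hq
        simp only [hμ']
        rw [Int.floor_sub_natCast]
        push_cast
        ring
      rw [Finset.sum_congr rfl hfl, Finset.sum_sub_distrib]
      have : ((∑ q ∈ T, a q : ℕ) : ℚ) = (e : ℚ) := by rw [hasum]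
      push_cast at this hf ⊢
      linarith
    obtain ⟨f', hf'mem, hf'sum⟩ := ih (x - m) hx' T μ' w hT
      (fun q hq => by simp only [hμ']; linarith [haq q hq]) hw hrep' hm' hf'
    refine ⟨Fin.cons um f', ?_, ?_⟩
    · intro j
      refine Fin.cases ?_ ?_ j
      · rw [Fin.cons_zero, ← hum]; exact hmmem
      · intro i; rw [Fin.cons_succ]; exact hf'mem i
    · rw [Fin.sum_univ_succ]
      simp only [Fin.cons_zero, Fin.cons_succ]
      rw [← hum, ← hf'sum]
      abel

theorem exists_rep {n : ℕ} (σ : Set (Fin n → ℚ)) (Q' : Set (Fin n → ℚ))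
    (e k : ℕ) (he : 1 ≤ e) (hk : 1 ≤ k) (hn : (n : ℤ) ≤ (e : ℤ) + 1)
    (x : Fin n → ℚ)
    (hx : x ∈ (((k*e : ℕ)) : ℚ) • (convexHull ℚ Q' + dualCone σ)) :
    ∃ (T : Finset (Fin n → ℚ)) (μ : (Fin n → ℚ) → ℚ) (w : Fin n → ℚ),
      ↑T ⊆ Q' ∧ (∀ q ∈ T, 0 ≤ μ q) ∧ w ∈ dualCone σ ∧
      x = (∑ q ∈ T, μ q • q) + w ∧
      ((k : ℚ) * e ≤ ∑ q ∈ T, μ q) ∧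
      ((k : ℚ) * e - e ≤ ∑ q ∈ T, (⌊μ q⌋ : ℚ)) := by
  classical
  set N : ℕ := k * e with hN
  obtain ⟨p, hp, hpe⟩ := hx
  obtain ⟨yc, hyc, yd, hyd, rfl⟩ := hp
  have hNpos : (0 : ℚ) < (N : ℚ) := by
    have : 1 ≤ N := Nat.one_le_iff_ne_zero.mpr (by positivity)
    exact_mod_cast this
  -- Caratheodory
  rw [convexHull_eq_union] at hyc
  simp only [Set.mem_iUnion] at hyc
  obtain ⟨T, hTQ, hTai, hycT⟩ := hyc
  rw [Finset.convexHull_eq] at hycT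
  obtain ⟨wgt, hwgt0, hwgt1, hcm⟩ := hycT
  have hyc_eq : yc = ∑ q ∈ T, wgt q • q := by
    rw [← hcm, Finset.centerMass_eq_of_sum_1 _ _ hwgt1]
    rfl
  set μ : (Fin n → ℚ) → ℚ := fun q => (N : ℚ) * wgt q with hμdef
  set w₀ : Fin n → ℚ := (N : ℚ) • yd with hw₀
  have hw₀d : w₀ ∈ dualCone σ := dual_smul hNpos.le hyd
  have hrep : x = (∑ q ∈ T, μ q • q) + w₀ := by
    rw [← hpe, hyc_eq]
    show (N : ℚ) • ((∑ q ∈ T, wgt q • q) + yd) = _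
    rw [smul_add, Finset.smul_sum]
    congr 1
    exact Finset.sum_congr rfl (fun q _ => by rw [hμdef, smul_smul])
  have hμ0 : ∀ q ∈ T, 0 ≤ μ q := fun q hq => by
    rw [hμdef]; exact mul_nonneg hNpos.le (hwgt0 q hq)
  have hμsum : ∑ q ∈ T, μ q = (N : ℚ) := by
    rw [hμdef, ← Finset.mul_sum, hwgt1, mul_one]
  have hNk : ((N : ℚ)) = (k : ℚ) * e := by rw [hN]; push_cast; ring
  -- cardinality bound from affine independence
  have hcardT : T.card ≤ n + 1 := by
    have h1 := hTai.card_le_finrank_succ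
    have h2 : Module.finrank ℚ (vectorSpan ℚ (Set.range ((↑) : T → (Fin n → ℚ)))) ≤
        Module.finrank ℚ (Fin n → ℚ) := Submodule.finrank_le _
    have h3 : Module.finrank ℚ (Fin n → ℚ) = n := by
      rw [Module.finrank_pi]; simp
    rw [Fintype.card_coe] at h1
    omega
  set S : Finset (Fin n → ℚ) := T.filter (fun q => Int.fract (μ q) ≠ 0) with hSdef
  -- the sum of all floors, as an integer
  have floor_sum_eq : ∀ ν : (Fin n → ℚ) → ℚ,
      ∑ q ∈ T, (⌊ν q⌋ : ℚ) = (∑ q ∈ T, ν q) - ∑ q ∈ T, Int.fract (ν q) := by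
    intro ν
    rw [← Finset.sum_sub_distrib]
    exact Finset.sum_congr rfl (fun q _ => by rw [Int.self_sub_fract])
  by_cases hScard : S.card ≤ n
  · -- good representation already
    refine ⟨T, μ, w₀, hTQ, hμ0, hw₀d, hrep, by rw [hμsum, hNk], ?_⟩
    have hts : ∑ q ∈ T, Int.fract (μ q) = ∑ q ∈ S, Int.fract (μ q) := by
      refine (Finset.sum_subset (Finset.filter_subset _ _) ?_).symm
      intro q hqT hqS
      simp only [hSdef, Finset.mem_filter, not_and, not_not] at hqS
      exact hqS hqT
    have htle : ∑ q ∈ T, Int.fract (μ q) ≤ (e : ℚ) := by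
      rcases S.eq_empty_or_nonempty with hSe | hSne
      · rw [hts, hSe]
        simp
      · -- integer strictly less than card S ≤ n
        have hlt : ∑ q ∈ S, Int.fract (μ q) < S.card := by
          calc ∑ q ∈ S, Int.fract (μ q) < ∑ _q ∈ S, (1 : ℚ) :=
              Finset.sum_lt_sum_of_nonempty hSne (fun q _ => Int.fract_lt_one _)
            _ = S.card := by simp
        set Z : ℤ := (N : ℤ) - ∑ q ∈ T, ⌊μ q⌋ with hZ
        have hZcast : (Z : ℚ) = ∑ q ∈ T, Int.fract (μ q) := by
          rw [hZ]
          push_cast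
          rw [floor_sum_eq μ, hμsum]
          ring
        have hZlt : (Z : ℚ) < ((S.card : ℤ) : ℚ) := by
          rw [hZcast, hts]; exact_mod_cast hlt
        have : Z < (S.card : ℤ) := by exact_mod_cast hZlt
        have hZle : Z ≤ (n : ℤ) - 1 := by
          have : Z ≤ (S.card : ℤ) - 1 := by omega
          have h2 : ((S.card : ℤ)) ≤ n := by exact_mod_cast hScard
          omega
        have : (Z : ℚ) ≤ (e : ℚ) := by
          have : Z ≤ (e : ℤ) := by omega
          exact_mod_cast this
        rw [hZcast] at this
        exact this
    rw [floor_sum_eq μ, hμsum, hNk]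
    linarith
  · -- all fractional parts nonzero; perturb along a linear relation
    have hsub : S.card ≤ T.card := Finset.card_le_card (Finset.filter_subset _ _)
    have hST : S = T := by
      apply Finset.eq_of_subset_of_card_le (Finset.filter_subset _ _)
      rw [← hSdef]
      omega
    have hfrac : ∀ q ∈ T, Int.fract (μ q) ≠ 0 := by
      intro q hq
      have : q ∈ S := hST ▸ hq
      simp only [hSdef, Finset.mem_filter] at this
      exact this.2
    have hcardT' : T.card = n + 1 := by
      have : S.card ≤ T.card := Finset.card_le_card (Finset.filter_subset _ _)
      omega
    -- linear dependence
    have hnli : ¬ LinearIndependent ℚ ((↑) : T → (Fin n → ℚ)) := by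
      intro hli
      have := hli.fintype_card_le_finrank
      rw [Fintype.card_coe, hcardT'] at this
      have h3 : Module.finrank ℚ (Fin n → ℚ) = n := by
        rw [Module.finrank_pi]; simp
      omega
    obtain ⟨g, hgsum, i₀, hgi₀⟩ := Fintype.not_linearIndependent_iff.mp hnli
    set c : (Fin n → ℚ) → ℚ := fun q => if h : q ∈ T then g ⟨q, h⟩ else 0 with hcdef
    have hc_att : ∀ (F : (Fin n → ℚ) → (Fin n → ℚ)) , True := fun _ => trivial
    have hrel : ∑ q ∈ T, c q • q = 0 := by
      rw [← Finset.sum_coe_sort T (fun q => c q • q), ← hgsum]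
      exact Finset.sum_congr rfl (fun i _ => by rw [hcdef]; simp [i.2])
    have hcsum_ne : ∑ q ∈ T, c q ≠ 0 := by
      intro hzero
      have hg0 : ∀ i : T, g i = 0 := by
        have := affineIndependent_iff.mp hTai Finset.univ g
        have hsum_eq : ∑ i : T, g i = ∑ q ∈ T, c q := by
          rw [← Finset.sum_coe_sort T c]
          exact Finset.sum_congr rfl (fun i _ => by rw [hcdef]; simp [i.2])
        have h2 : ∑ i ∈ Finset.univ, g i = 0 := by rw [hsum_eq, hzero]
        have h3 : ∑ i ∈ Finset.univ, g i • (i : Fin n → ℚ) = 0 := by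
          rw [hgsum]
        intro i
        exact this h2 h3 i (Finset.mem_univ i)
      exact hgi₀ (hg0 i₀)
    -- normalize the relation
    set s₀ : ℚ := ∑ q ∈ T, c q with hs₀
    set c' : (Fin n → ℚ) → ℚ := fun q => c q / s₀ with hc'def
    have hc'sum : ∑ q ∈ T, c' q = 1 := by
      rw [hc'def]
      simp only []
      rw [← Finset.sum_div, ← hs₀, div_self hcsum_ne]
    have hc'rel : ∑ q ∈ T, c' q • q = 0 := by
      have h : ∑ q ∈ T, c' q • q = s₀⁻¹ • ∑ q ∈ T, c q • q := by
        rw [Finset.smul_sum]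
        refine Finset.sum_congr rfl (fun q _ => ?_)
        rw [hc'def]
        simp only []
        rw [div_eq_inv_mul, ← smul_smul]
      rw [h, hrel, smul_zero]
    set f : (Fin n → ℚ) → ℚ := fun q => Int.fract (μ q) with hfdef
    set candP : Finset ℚ :=
      (T.filter (fun q => 0 < c' q)).image (fun q => (1 - f q) / c' q) with hcandP
    set candN : Finset ℚ :=
      (T.filter (fun q => c' q < 0)).image (fun q => f q / (- c' q)) with hcandN
    set cand := candP ∪ candN with hcand
    have hcandP_ne : candP.Nonempty := by
      have hex : ∃ q ∈ T, 0 < c' q := by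
        by_contra hcon
        push_neg at hcon
        have : ∑ q ∈ T, c' q ≤ 0 := Finset.sum_nonpos hcon
        rw [hc'sum] at this
        linarith
      obtain ⟨q, hqT, hq⟩ := hex
      exact ⟨_, Finset.mem_image_of_mem _ (Finset.mem_filter.mpr ⟨hqT, hq⟩)⟩
    have hcand_ne : cand.Nonempty := by
      obtain ⟨y, hy⟩ := hcandP_ne
      exact ⟨y, Finset.mem_union_left _ hy⟩
    set τ : ℚ := cand.min' hcand_ne with hτ
    have hfrac_pos : ∀ q ∈ T, 0 < f q :=
      fun q hq => lt_of_le_of_ne (Int.fract_nonneg _) (Ne.symm (hfrac q hq))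
    have hfrac_lt1 : ∀ q : Fin n → ℚ, f q < 1 := fun q => Int.fract_lt_one _
    have hcand_pos : ∀ y ∈ cand, 0 < y := by
      intro y hy
      rw [hcand, Finset.mem_union] at hy
      rcases hy with hy | hy
      · obtain ⟨q, hq, rfl⟩ := Finset.mem_image.mp hy
        obtain ⟨hqT, hc⟩ := Finset.mem_filter.mp hq
        exact div_pos (by linarith [hfrac_lt1 q]) hc
      · obtain ⟨q, hq, rfl⟩ := Finset.mem_image.mp hy
        obtain ⟨hqT, hc⟩ := Finset.mem_filter.mp hq
        exact div_pos (hfrac_pos q hqT) (by linarith)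
    have hτpos : 0 < τ := hcand_pos _ (cand.min'_mem hcand_ne)
    set μ' : (Fin n → ℚ) → ℚ := fun q => μ q + τ * c' q with hμ'def
    have hμ'0 : ∀ q ∈ T, 0 ≤ μ' q := by
      intro q hq
      rw [hμ'def]
      simp only []
      have hfl : (0:ℚ) ≤ (⌊μ q⌋ : ℚ) := by
        exact_mod_cast Int.floor_nonneg.mpr (hμ0 q hq)
      have hsf : μ q - f q = (⌊μ q⌋ : ℚ) := Int.self_sub_fract _
      rcases lt_trichotomy (c' q) 0 with hc | hc | hc
      · have hmem : f q / (- c' q) ∈ cand :=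
          Finset.mem_union_right _
            (Finset.mem_image_of_mem _ (Finset.mem_filter.mpr ⟨hq, hc⟩))
        have hle : τ ≤ f q / (- c' q) := cand.min'_le _ hmem
        have h2 : τ * (- c' q) ≤ f q := (le_div_iff₀ (by linarith)).mp hle
        nlinarith
      · rw [hc]
        simpa using hμ0 q hq
      · nlinarith [hμ0 q hq, hτpos]
    have hrepμ' : x = (∑ q ∈ T, μ' q • q) + w₀ := by
      rw [hrep]
      congr 1
      have h : ∑ q ∈ T, μ' q • q = (∑ q ∈ T, μ q • q) + τ • ∑ q ∈ T, c' q • q := by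
        rw [Finset.smul_sum, ← Finset.sum_add_distrib]
        refine Finset.sum_congr rfl (fun q _ => ?_)
        rw [hμ'def]
        simp only []
        rw [add_smul, smul_smul]
      rw [h, hc'rel, smul_zero, add_zero]
    have hμ'sum : ∑ q ∈ T, μ' q = (N : ℚ) + τ := by
      rw [hμ'def]
      simp only []
      rw [Finset.sum_add_distrib, hμsum, ← Finset.mul_sum, hc'sum, mul_one]
    have hq₀ : ∃ q₀ ∈ T, Int.fract (μ' q₀) = 0 := by
      have hτmem : τ ∈ candP ∪ candN := cand.min'_mem hcand_ne
      rw [Finset.mem_union] at hτmem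
      rcases hτmem with hy | hy
      · obtain ⟨q, hq, heq⟩ := Finset.mem_image.mp hy
        obtain ⟨hqT, hc⟩ := Finset.mem_filter.mp hq
        refine ⟨q, hqT, ?_⟩
        rw [hμ'def]
        simp only []
        have hτc : τ * c' q = 1 - f q := by
          rw [← heq]
          field_simp
        rw [hτc]
        have hval : μ q + (1 - f q) = ((⌊μ q⌋ + 1 : ℤ) : ℚ) := by
          have hsf : μ q - f q = (⌊μ q⌋ : ℚ) := Int.self_sub_fract _
          push_cast
          linarith
        rw [hval, Int.fract_intCast]
      · obtain ⟨q, hq, heq⟩ := Finset.mem_image.mp hy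
        obtain ⟨hqT, hc⟩ := Finset.mem_filter.mp hq
        refine ⟨q, hqT, ?_⟩
        rw [hμ'def]
        simp only []
        have hτc : τ * c' q = - f q := by
          have hne : c' q ≠ 0 := hc.ne
          rw [← heq, div_mul_eq_mul_div, div_neg, mul_div_assoc, div_self hne, mul_one]
        rw [hτc]
        have hval : μ q + - f q = ((⌊μ q⌋ : ℤ) : ℚ) := by
          have hsf : μ q - f q = (⌊μ q⌋ : ℚ) := Int.self_sub_fract _
          push_cast
          linarith
        rw [hval, Int.fract_intCast]
    refine ⟨T, μ', w₀, hTQ, hμ'0, hw₀d, hrepμ', ?_, ?_⟩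
    · rw [hμ'sum, hNk]
      linarith
    · obtain ⟨q₀, hq₀T, hfr0⟩ := hq₀
      have ht' : ∑ q ∈ T, Int.fract (μ' q) ≤ (n : ℚ) := by
        have hsplit : ∑ q ∈ T, Int.fract (μ' q) =
            Int.fract (μ' q₀) + ∑ q ∈ T.erase q₀, Int.fract (μ' q) :=
          (Finset.add_sum_erase T _ hq₀T).symm
        rw [hsplit, hfr0, zero_add]
        calc ∑ q ∈ T.erase q₀, Int.fract (μ' q) ≤ ∑ _q ∈ T.erase q₀, (1:ℚ) :=
            Finset.sum_le_sum (fun q _ => (Int.fract_lt_one _).le)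
          _ = ((T.erase q₀).card : ℚ) := by simp
          _ = (n : ℚ) := by rw [Finset.card_erase_of_mem hq₀T, hcardT']; simp
      set Z : ℤ := ∑ q ∈ T, ⌊μ' q⌋ with hZ
      have hZeq : (Z : ℚ) = ∑ q ∈ T, ((⌊μ' q⌋ : ℤ) : ℚ) := by
        rw [hZ]
        push_cast
        rfl
      have hZcast : (Z : ℚ) = (N : ℚ) + τ - ∑ q ∈ T, Int.fract (μ' q) := by
        rw [hZeq, floor_sum_eq μ', hμ'sum]
      have hZgtq : ((N : ℚ) - n) < (Z : ℚ) := by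
        rw [hZcast]
        linarith
      have hZgt : ((N : ℤ) - n) < Z := by exact_mod_cast hZgtq
      have hZge : ((N : ℤ) - e) ≤ Z := by omega
      have hfin : ((N : ℚ) - e) ≤ (Z : ℚ) := by exact_mod_cast hZge
      rw [hZeq] at hfin
      rw [← hNk]
      exact hfin


lemma castZ_sum {n : ℕ} {ι : Type*} [Fintype ι] (f : ι → Fin n → ℤ) :
    castZ (∑ j, f j) = ∑ j, castZ (f j) := by
  funext i
  simp only [castZ, Finset.sum_apply]
  push_cast
  rfl

/-- Let `σ ⊆ ℚⁿ` be a strongly convex polyhedral cone with dual `σ^∨`, and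
`P = Q + σ^∨ ⊆ σ^∨` an integral `σ^∨`-polyhedron (the vertices of `Q` are lattice points).
Then for every integer `e ≥ n − 1` the polyhedron `eP` is normal: for every `k ≥ 1`, every
lattice point of `k·(eP)` is a sum of `k` lattice points of `eP`. -/
theorem stmt10 {n : ℕ} (σ : Set (Fin n → ℚ))
    (hσpoly : IsPolyhedralCone σ) (hσconv : IsStronglyConvex σ)
    (Q : Finset (Fin n → ℤ)) (hQ : Q.Nonempty)
    (P : Set (Fin n → ℚ))
    (hP : P = convexHull ℚ (castZ '' ↑Q) + dualCone σ)
    (hPsub : P ⊆ dualCone σ) :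
    ∀ e : ℕ, (n : ℤ) - 1 ≤ (e : ℤ) →
      ∀ k : ℕ, 1 ≤ k →
        ∀ v : Fin n → ℤ, castZ v ∈ dilate (dualCone σ) P (k * e) →
          ∃ f : Fin k → (Fin n → ℤ),
            (∀ j, castZ (f j) ∈ dilate (dualCone σ) P e) ∧ v = ∑ j, f j := by
  classical
  intro e he k hk v hv
  rcases Nat.eq_zero_or_pos e with rfl | hepos
  · -- the degenerate case e = 0
    have h0 : dilate (dualCone σ) P 0 = dualCone σ := if_pos rfl
    rw [Nat.mul_zero, h0] at hv
    refine ⟨fun j => if j = ⟨0, hk⟩ then v else 0, fun j => ?_, ?_⟩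
    · rw [h0]
      simp only []
      by_cases hj : j = ⟨0, hk⟩
      · rw [if_pos hj]; exact hv
      · rw [if_neg hj]
        have : castZ (0 : Fin n → ℤ) = (0 : Fin n → ℚ) := by
          funext i; simp [castZ]
        rw [this]
        exact dual_zero
    · have := Finset.sum_ite_eq' Finset.univ (⟨0, hk⟩ : Fin k)
        (fun _ => v)
      simp only [Finset.mem_univ, if_true] at this
      exact this.symm
  · -- the main case e ≥ 1
    have hke : k * e ≠ 0 := Nat.mul_ne_zero (by omega) (by omega)
    have hdil : dilate (dualCone σ) P (k * e) = ((k * e : ℕ) : ℚ) • P := if_neg hke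
    rw [hdil] at hv
    set Q' : Set (Fin n → ℚ) := castZ '' ↑Q with hQ'
    have hQ'σ : Q' ⊆ dualCone σ := by
      intro q hq
      apply hPsub
      rw [hP]
      exact ⟨q, subset_convexHull ℚ _ hq, 0, dual_zero, add_zero q⟩
    have hQ'l : ∀ q ∈ Q', latt q := by
      rintro q ⟨u, _, rfl⟩
      exact ⟨u, rfl⟩
    have hv' : castZ v ∈ ((k * e : ℕ) : ℚ) • (convexHull ℚ Q' + dualCone σ) := by
      rwa [hP] at hv
    obtain ⟨T, μ, w, hTQ, hμ0, hw, hrep, hm, hf⟩ :=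
      exists_rep σ Q' e k hepos hk (by omega) (castZ v) hv'
    obtain ⟨f, hfmem, hfsum⟩ := peel σ Q' hQ'σ hQ'l e hepos k hk (castZ v)
      ⟨v, rfl⟩ T μ w hTQ hμ0 hw hrep hm hf
    refine ⟨f, fun j => ?_, ?_⟩
    · have hdile : dilate (dualCone σ) P e = ((e : ℕ) : ℚ) • P := if_neg (by omega)
      rw [hdile, hP]
      exact hfmem j
    · apply castZ_inj
      rw [hfsum, castZ_sum]
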